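/- Let f_i : ℝ^{n+1} → ℝ be C³ functions, let G(z) = log(∑_{i=1}^n exp(f_i(z))), and let p_i(z) = exp(f_i(z))/∑_j exp(f_j(z)). Fix z and directions u, h ∈ ℝ^{n+1}. Define A_i = ∇f_i(z)[u], B_i = ∇²f_i(z)[u,u], C_i = ∇²f_i(z)[u,h], H_i = ∇f_i(z)[h], T_i = ∇³f_i(z)[u,u,h], and let I be a random index with P(I=i) = p_i(z). Then ∇²G(z)[u,u] = E[B_I] + Var(A_I) and ∇³G(z)[u,u,h] = E[T_I] + Cov(B_I,H_I) + 2·Cov(A_I,C_I) + Cov((A_I − E A_I)², H_I). -/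

import Mathlib

/-- Expectation of φ under finite weights p. -/
def finExp {n : ℕ} (p φ : Fin n → ℝ) : ℝ := ∑ i, p i * φ i

/-- Covariance of φ, ψ under finite weights p. -/
def finCov {n : ℕ} (p φ ψ : Fin n → ℝ) : ℝ :=
  finExp p (fun i => φ i * ψ i) - finExp p φ * finExp p ψ

/-- Variance of φ under finite weights p. -/
def finVar {n : ℕ} (p φ : Fin n → ℝ) : ℝ := finCov p φ φ

set_option maxHeartbeats 1600000

section Aux
variable {E : Type*} [NormedAddCommGroup E] [NormedSpace ℝ E]

lemma aux_iter2 (g : E → ℝ) (hg : ContDiff ℝ 2 g) (z u h : E) :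
    iteratedFDeriv ℝ 2 g z ![u, h] = fderiv ℝ (fun w => fderiv ℝ g w h) z u := by
  have hd : DifferentiableAt ℝ (fderiv ℝ g) z :=
    ((hg.fderiv_right (m := 1) (by norm_num)).differentiable (by norm_num)) z
  have h2 := ((ContinuousLinearMap.apply ℝ ℝ h).hasFDerivAt
      (x := fderiv ℝ g z)).comp z hd.hasFDerivAt
  have e2 : (fun w => fderiv ℝ g w h)
      = (ContinuousLinearMap.apply ℝ ℝ h) ∘ (fderiv ℝ g) := rfl
  rw [iteratedFDeriv_two_apply, e2, h2.fderiv]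
  simp

lemma aux_iter3 (g : E → ℝ) (hg : ContDiff ℝ 3 g) (z u h : E) :
    iteratedFDeriv ℝ 3 g z ![u, u, h]
      = fderiv ℝ (fun w => fderiv ℝ (fun y => fderiv ℝ g y h) w u) z u := by
  have hfd2 : ContDiff ℝ 2 (fderiv ℝ g) := hg.fderiv_right (m := 2) (by norm_num)
  have h1 : iteratedFDeriv ℝ 3 g z ![u, u, h]
      = iteratedFDeriv ℝ 2 (fun y => fderiv ℝ g y h) z ![u, u] := by
    have hsr := iteratedFDeriv_succ_apply_right (𝕜 := ℝ) (f := g) (x := z)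
      (n := 2) ![u, u, h]
    have hini : Fin.init ![u, u, h] = ![u, u] := by
      funext i; fin_cases i <;> rfl
    have hlast : (![u, u, h] : Fin 3 → E) (Fin.last 2) = h := rfl
    rw [hini, hlast] at hsr
    have e := (ContinuousLinearMap.apply ℝ ℝ h).iteratedFDeriv_comp_left
        (f := fderiv ℝ g) (x := z) hfd2.contDiffAt (i := 2) le_rfl
    have e2 : (fun y => fderiv ℝ g y h)
        = (ContinuousLinearMap.apply ℝ ℝ h) ∘ (fderiv ℝ g) := rfl
    rw [hsr, e2, e]
    rfl
  rw [h1]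
  exact aux_iter2 (fun y => fderiv ℝ g y h)
    ((ContinuousLinearMap.apply ℝ ℝ h).contDiff.comp hfd2) z u u

end Aux

/-- Cumulant identities for the log-partition function G = log ∑ᵢ exp(fᵢ):
    the second and third directional derivatives of G in directions u, u, h are
    expressed via expectations/variances/covariances under the softmax weights. -/
theorem logsumexp_cumulant_identities {n : ℕ} (hn : 0 < n)
    (f : Fin n → (Fin (n + 1) → ℝ) → ℝ) (hf : ∀ i, ContDiff ℝ 3 (f i))
    (z u h : Fin (n + 1) → ℝ) :
    let G : (Fin (n + 1) → ℝ) → ℝ := fun w => Real.log (∑ i, Real.exp (f i w))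
    let p : Fin n → ℝ := fun i => Real.exp (f i z) / ∑ j, Real.exp (f j z)
    let A : Fin n → ℝ := fun i => fderiv ℝ (f i) z u
    let B : Fin n → ℝ := fun i => iteratedFDeriv ℝ 2 (f i) z ![u, u]
    let Cm : Fin n → ℝ := fun i => iteratedFDeriv ℝ 2 (f i) z ![u, h]
    let H : Fin n → ℝ := fun i => fderiv ℝ (f i) z h
    let T : Fin n → ℝ := fun i => iteratedFDeriv ℝ 3 (f i) z ![u, u, h]
    iteratedFDeriv ℝ 2 G z ![u, u] = finExp p B + finVar p A ∧
    iteratedFDeriv ℝ 3 G z ![u, u, h]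
      = finExp p T + finCov p B H + 2 * finCov p A Cm
        + finCov p (fun i => (A i - finExp p A) ^ 2) H := by
  classical
  intro G p A B Cm H T
  have hne : Nonempty (Fin n) := ⟨⟨0, hn⟩⟩
  set S : (Fin (n+1) → ℝ) → ℝ := fun w => ∑ i, Real.exp (f i w) with hS_def
  have hSpos : ∀ w, 0 < S w := fun w =>
    Finset.sum_pos (fun i _ => Real.exp_pos _) Finset.univ_nonempty
  have hSne : ∀ w, S w ≠ 0 := fun w => (hSpos w).ne'
  have hfd : ∀ i, Differentiable ℝ (f i) := fun i => (hf i).differentiable (by norm_num)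
  have cS : ContDiff ℝ 3 S := ContDiff.sum fun i _ => Real.contDiff_exp.comp (hf i)
  have cG : ContDiff ℝ 3 G := cS.log hSne
  have hS' : ∀ w, HasFDerivAt S (∑ i, Real.exp (f i w) • fderiv ℝ (f i) w) w := fun w =>
    HasFDerivAt.fun_sum fun i _ => ((hfd i w).hasFDerivAt.exp)
  have hSinv : ∀ w, HasFDerivAt (fun w' => (S w')⁻¹)
      ((-(S w ^ 2)⁻¹) • (∑ i, Real.exp (f i w) • fderiv ℝ (f i) w)) w := fun w =>
    (hasDerivAt_inv (hSne w)).comp_hasFDerivAt w (hS' w)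
  -- directional derivative of G
  have hDG : ∀ v : (Fin (n+1) → ℝ), (fun w => fderiv ℝ G w v)
      = fun w => (∑ i, Real.exp (f i w) * fderiv ℝ (f i) w v) / S w := by
    intro v; funext w
    have hG' := (Real.hasDerivAt_log (hSne w)).comp_hasFDerivAt w (hS' w)
    rw [show G = Real.log ∘ S from rfl, hG'.fderiv]
    simp [ContinuousLinearMap.smul_apply, ContinuousLinearMap.coe_sum',
      Finset.sum_apply, div_eq_inv_mul, Finset.mul_sum, smul_eq_mul]
  -- smoothness of directional derivative functions
  have cAv : ∀ (i) (v : Fin (n+1) → ℝ), ContDiff ℝ 2 (fun w => fderiv ℝ (f i) w v) := fun i v =>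
    (ContinuousLinearMap.apply ℝ ℝ v).contDiff.comp ((hf i).fderiv_right (by norm_num))
  have cCu : ∀ i, ContDiff ℝ 1 (fun w => fderiv ℝ (fun w' => fderiv ℝ (f i) w' h) w u) :=
    fun i => (ContinuousLinearMap.apply ℝ ℝ u).contDiff.comp
      ((cAv i h).fderiv_right (by norm_num))
  -- helper to convert p-expectations to plain sums
  have hp : ∀ X : Fin n → ℝ,
      (∑ i, (Real.exp (f i z) / ∑ j, Real.exp (f j z)) * X i)
        = (∑ i, Real.exp (f i z) * X i) * (S z)⁻¹ := by
    intro X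
    rw [Finset.sum_mul]
    exact Finset.sum_congr rfl fun i _ => by rw [div_eq_mul_inv]; ring
  have hB : ∀ i, B i = fderiv ℝ (fun w => fderiv ℝ (f i) w u) z u := fun i =>
    aux_iter2 (f i) ((hf i).of_le (by norm_num)) z u u
  have hCm : ∀ i, Cm i = fderiv ℝ (fun w => fderiv ℝ (f i) w h) z u := fun i =>
    aux_iter2 (f i) ((hf i).of_le (by norm_num)) z u h
  have hT : ∀ i, T i
      = fderiv ℝ (fun w => fderiv ℝ (fun w' => fderiv ℝ (f i) w' h) w u) z u := fun i =>
    aux_iter3 (f i) (hf i) z u h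
  constructor
  · -- second derivative
    rw [aux_iter2 G (cG.of_le (by norm_num)) z u u, hDG u]
    have hN : HasFDerivAt (fun w => ∑ i, Real.exp (f i w) * fderiv ℝ (f i) w u)
        (∑ i, (Real.exp (f i z) • fderiv ℝ (fun w => fderiv ℝ (f i) w u) z
          + fderiv ℝ (f i) z u • (Real.exp (f i z) • fderiv ℝ (f i) z))) z :=
      HasFDerivAt.fun_sum fun i _ => ((hfd i z).hasFDerivAt.exp.fun_mul
        (((cAv i u).differentiable (by norm_num) z).hasFDerivAt))
    have hmain := hN.fun_mul (hSinv z)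
    simp only [div_eq_mul_inv]
    rw [hmain.fderiv]
    simp only [ContinuousLinearMap.add_apply, ContinuousLinearMap.smul_apply,
      ContinuousLinearMap.coe_sum', Finset.sum_apply, smul_eq_mul]
    simp only [finExp, finVar, finCov, hB, p, A, hp]
    rw [Finset.sum_add_distrib]
    have h1 : (∑ x, ((fderiv ℝ (f x) z) u * (Real.exp (f x z) * (fderiv ℝ (f x) z) u)))
        = ∑ x, Real.exp (f x z) * ((fderiv ℝ (f x) z) u * (fderiv ℝ (f x) z) u) :=
      Finset.sum_congr rfl fun i _ => by ring
    rw [h1]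
    field_simp
    ring
  · -- third derivative
    rw [aux_iter3 G cG z u h, hDG h]
    -- first-level derivative of w ↦ (∑ exp (f i w) * fderiv (f i) w h) / S w in direction u
    have hDg1 : (fun w => fderiv ℝ
          (fun w' => (∑ i, Real.exp (f i w') * fderiv ℝ (f i) w' h) / S w') w u)
        = fun w => ((∑ i, Real.exp (f i w)
              * (fderiv ℝ (fun w' => fderiv ℝ (f i) w' h) w u
                  + fderiv ℝ (f i) w h * fderiv ℝ (f i) w u)) * S w
            - (∑ i, Real.exp (f i w) * fderiv ℝ (f i) w h)
              * (∑ i, Real.exp (f i w) * fderiv ℝ (f i) w u))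
            * ((S w)⁻¹ * (S w)⁻¹) := by
      funext w
      have hN : HasFDerivAt (fun w' => ∑ i, Real.exp (f i w') * fderiv ℝ (f i) w' h)
          (∑ i, (Real.exp (f i w) • fderiv ℝ (fun w' => fderiv ℝ (f i) w' h) w
            + fderiv ℝ (f i) w h • (Real.exp (f i w) • fderiv ℝ (f i) w))) w :=
        HasFDerivAt.fun_sum fun i _ => ((hfd i w).hasFDerivAt.exp.fun_mul
          (((cAv i h).differentiable (by norm_num) w).hasFDerivAt))
      have hmain := hN.fun_mul (hSinv w)
      simp only [div_eq_mul_inv]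
      rw [hmain.fderiv]
      simp only [ContinuousLinearMap.add_apply, ContinuousLinearMap.smul_apply,
        ContinuousLinearMap.coe_sum', Finset.sum_apply, smul_eq_mul]
      rw [Finset.sum_add_distrib]
      have h1 : (∑ x, ((fderiv ℝ (f x) w) h * (Real.exp (f x w) * (fderiv ℝ (f x) w) u)))
          = ∑ x, Real.exp (f x w) * ((fderiv ℝ (f x) w) h * (fderiv ℝ (f x) w) u) :=
        Finset.sum_congr rfl fun i _ => by ring
      have h2 : (∑ i, Real.exp (f i w)
            * (fderiv ℝ (fun w' => fderiv ℝ (f i) w' h) w u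
                + fderiv ℝ (f i) w h * fderiv ℝ (f i) w u))
          = (∑ i, Real.exp (f i w) * fderiv ℝ (fun w' => fderiv ℝ (f i) w' h) w u)
            + ∑ i, Real.exp (f i w) * (fderiv ℝ (f i) w h * fderiv ℝ (f i) w u) := by
        rw [← Finset.sum_add_distrib]
        exact Finset.sum_congr rfl fun i _ => by ring
      rw [h1, h2]
      field_simp
      ring
    rw [hDg1]
    have dAu : ∀ i, HasFDerivAt (fun w => fderiv ℝ (f i) w u)
        (fderiv ℝ (fun w => fderiv ℝ (f i) w u) z) z := fun i =>
      (((cAv i u).differentiable (by norm_num)) z).hasFDerivAt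
    have dAh : ∀ i, HasFDerivAt (fun w => fderiv ℝ (f i) w h)
        (fderiv ℝ (fun w => fderiv ℝ (f i) w h) z) z := fun i =>
      (((cAv i h).differentiable (by norm_num)) z).hasFDerivAt
    have dCu : ∀ i, HasFDerivAt (fun w => fderiv ℝ (fun w' => fderiv ℝ (f i) w' h) w u)
        (fderiv ℝ (fun w => fderiv ℝ (fun w' => fderiv ℝ (f i) w' h) w u) z) z := fun i =>
      (((cCu i).differentiable (by norm_num)) z).hasFDerivAt
    have hP1 := HasFDerivAt.fun_sum (fun i (_ : i ∈ Finset.univ) =>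
      ((hfd i z).hasFDerivAt.exp.fun_mul ((dCu i).fun_add ((dAh i).fun_mul (dAu i)))))
    have hNh := HasFDerivAt.fun_sum (fun i (_ : i ∈ Finset.univ) =>
      ((hfd i z).hasFDerivAt.exp.fun_mul (dAh i)))
    have hNu := HasFDerivAt.fun_sum (fun i (_ : i ∈ Finset.univ) =>
      ((hfd i z).hasFDerivAt.exp.fun_mul (dAu i)))
    have hmain := ((hP1.fun_mul (hS' z)).fun_sub (hNh.fun_mul hNu)).fun_mul ((hSinv z).fun_mul (hSinv z))
    have hfder : fderiv ℝ (fun w => ((∑ i, Real.exp (f i w)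
              * (fderiv ℝ (fun w' => fderiv ℝ (f i) w' h) w u
                  + fderiv ℝ (f i) w h * fderiv ℝ (f i) w u)) * S w
            - (∑ i, Real.exp (f i w) * fderiv ℝ (f i) w h)
              * (∑ i, Real.exp (f i w) * fderiv ℝ (f i) w u))
            * ((S w)⁻¹ * (S w)⁻¹)) z = _ := hmain.fderiv
    rw [hfder]
    simp only [ContinuousLinearMap.add_apply, ContinuousLinearMap.sub_apply,
      ContinuousLinearMap.smul_apply, ContinuousLinearMap.coe_sum',
      Finset.sum_apply, smul_eq_mul]
    simp only [finExp, finVar, finCov, hB, hCm, hT, p, hp]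
    have hAdef : ∀ i, A i = (fderiv ℝ (f i) z) u := fun _ => rfl
    have hHdef : ∀ i, H i = (fderiv ℝ (f i) z) h := fun _ => rfl
    simp only [hAdef, hHdef]
    have eL1 : (∑ i, Real.exp (f i z) *
          (fderiv ℝ (fun w' => fderiv ℝ (f i) w' h) z u
            + fderiv ℝ (f i) z h * fderiv ℝ (f i) z u))
        = (∑ i, Real.exp (f i z) * fderiv ℝ (fun w => fderiv ℝ (f i) w h) z u)
          + ∑ i, Real.exp (f i z) * (fderiv ℝ (f i) z h * fderiv ℝ (f i) z u) := by
      rw [← Finset.sum_add_distrib]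
      exact Finset.sum_congr rfl fun i _ => by ring
    have eL2 : (∑ x, (Real.exp (f x z)
            * (fderiv ℝ (fun w => fderiv ℝ (fun w' => fderiv ℝ (f x) w' h) w u) z u
              + (fderiv ℝ (f x) z h * fderiv ℝ (fun w => fderiv ℝ (f x) w u) z u
                + fderiv ℝ (f x) z u * fderiv ℝ (fun w' => fderiv ℝ (f x) w' h) z u))
          + (fderiv ℝ (fun w' => fderiv ℝ (f x) w' h) z u
              + fderiv ℝ (f x) z h * fderiv ℝ (f x) z u)
            * (Real.exp (f x z) * fderiv ℝ (f x) z u)))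
        = (∑ i, Real.exp (f i z)
              * fderiv ℝ (fun w => fderiv ℝ (fun w' => fderiv ℝ (f i) w' h) w u) z u)
          + ((∑ i, Real.exp (f i z)
              * (fderiv ℝ (fun w => fderiv ℝ (f i) w u) z u * fderiv ℝ (f i) z h))
          + (2 * (∑ i, Real.exp (f i z)
              * (fderiv ℝ (f i) z u * fderiv ℝ (fun w => fderiv ℝ (f i) w h) z u))
          + ∑ i, Real.exp (f i z)
              * (fderiv ℝ (f i) z h * (fderiv ℝ (f i) z u * fderiv ℝ (f i) z u)))) := by
      rw [Finset.mul_sum, ← Finset.sum_add_distrib, ← Finset.sum_add_distrib,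
        ← Finset.sum_add_distrib]
      exact Finset.sum_congr rfl fun i _ => by ring
    have eL3 : (∑ x, (Real.exp (f x z) * fderiv ℝ (fun w => fderiv ℝ (f x) w u) z u
            + fderiv ℝ (f x) z u * (Real.exp (f x z) * fderiv ℝ (f x) z u)))
        = (∑ i, Real.exp (f i z) * fderiv ℝ (fun w => fderiv ℝ (f i) w u) z u)
          + ∑ i, Real.exp (f i z) * (fderiv ℝ (f i) z u * fderiv ℝ (f i) z u) := by
      rw [← Finset.sum_add_distrib]
      exact Finset.sum_congr rfl fun i _ => by ring
    have eL4 : (∑ x, (Real.exp (f x z) * fderiv ℝ (fun w => fderiv ℝ (f x) w h) z u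
            + fderiv ℝ (f x) z h * (Real.exp (f x z) * fderiv ℝ (f x) z u)))
        = (∑ i, Real.exp (f i z) * fderiv ℝ (fun w => fderiv ℝ (f i) w h) z u)
          + ∑ i, Real.exp (f i z) * (fderiv ℝ (f i) z h * fderiv ℝ (f i) z u) := by
      rw [← Finset.sum_add_distrib]
      exact Finset.sum_congr rfl fun i _ => by ring
    have eR3 : (∑ i, Real.exp (f i z)
          * ((fderiv ℝ (f i) z u
              - (∑ i, Real.exp (f i z) * fderiv ℝ (f i) z u) * (S z)⁻¹) ^ 2
            * fderiv ℝ (f i) z h))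
        = ((∑ i, Real.exp (f i z)
              * (fderiv ℝ (f i) z h * (fderiv ℝ (f i) z u * fderiv ℝ (f i) z u)))
          - (2 * ((∑ i, Real.exp (f i z) * fderiv ℝ (f i) z u) * (S z)⁻¹))
            * ∑ i, Real.exp (f i z) * (fderiv ℝ (f i) z h * fderiv ℝ (f i) z u))
          + ((∑ i, Real.exp (f i z) * fderiv ℝ (f i) z u) * (S z)⁻¹) ^ 2
            * ∑ i, Real.exp (f i z) * fderiv ℝ (f i) z h := by
      rw [Finset.mul_sum, Finset.mul_sum, ← Finset.sum_sub_distrib,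
        ← Finset.sum_add_distrib]
      exact Finset.sum_congr rfl fun i _ => by ring
    have eR4 : (∑ i, Real.exp (f i z)
          * (fderiv ℝ (f i) z u
              - (∑ i, Real.exp (f i z) * fderiv ℝ (f i) z u) * (S z)⁻¹) ^ 2)
        = ((∑ i, Real.exp (f i z) * (fderiv ℝ (f i) z u * fderiv ℝ (f i) z u))
          - (2 * ((∑ i, Real.exp (f i z) * fderiv ℝ (f i) z u) * (S z)⁻¹))
            * ∑ i, Real.exp (f i z) * fderiv ℝ (f i) z u)
          + ((∑ i, Real.exp (f i z) * fderiv ℝ (f i) z u) * (S z)⁻¹) ^ 2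
            * ∑ i, Real.exp (f i z) := by
      rw [Finset.mul_sum, Finset.mul_sum, ← Finset.sum_sub_distrib,
        ← Finset.sum_add_distrib]
      exact Finset.sum_congr rfl fun i _ => by ring
    rw [eL1, eL2, eL3, eL4, eR3, eR4]
    simp only [hS_def]
    have hs0 : (∑ i, Real.exp (f i z)) ≠ 0 := hSne z
    set sE := (∑ i, Real.exp (f i z)) with hsE
    set sT := (∑ i, Real.exp (f i z)
        * fderiv ℝ (fun w => fderiv ℝ (fun w' => fderiv ℝ (f i) w' h) w u) z u) with hsT
    set sB := (∑ i, Real.exp (f i z) * fderiv ℝ (fun w => fderiv ℝ (f i) w u) z u) with hsB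
    set sC := (∑ i, Real.exp (f i z) * fderiv ℝ (fun w => fderiv ℝ (f i) w h) z u) with hsC
    set sA := (∑ i, Real.exp (f i z) * fderiv ℝ (f i) z u) with hsA
    set sH := (∑ i, Real.exp (f i z) * fderiv ℝ (f i) z h) with hsH
    set sAH := (∑ i, Real.exp (f i z) * (fderiv ℝ (f i) z h * fderiv ℝ (f i) z u)) with hsAH
    set sAA := (∑ i, Real.exp (f i z) * (fderiv ℝ (f i) z u * fderiv ℝ (f i) z u)) with hsAA
    set sBH := (∑ i, Real.exp (f i z)
        * (fderiv ℝ (fun w => fderiv ℝ (f i) w u) z u * fderiv ℝ (f i) z h)) with hsBH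
    set sAC := (∑ i, Real.exp (f i z)
        * (fderiv ℝ (f i) z u * fderiv ℝ (fun w => fderiv ℝ (f i) w h) z u)) with hsAC
    set sAAH := (∑ i, Real.exp (f i z)
        * (fderiv ℝ (f i) z h * (fderiv ℝ (f i) z u * fderiv ℝ (f i) z u))) with hsAAH
    clear_value sE sT sB sC sA sH sAH sAA sBH sAC sAAH
    clear eL1 eL2 eL3 eL4 eR3 eR4 hsE hsT hsB hsC hsA hsH hsAH hsAA hsBH hsAC hsAAH
      hB hCm hT hp hDg1 hDG hS' hSinv hSpos cS cG hfd cAv cCu dAu dAh dCu hP1 hNh hNu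
      hmain hfder hAdef hHdef hSne hS_def S hne hn f hf z u h G p A B Cm H T
    field_simp
    ring
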